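/- The center of the Lie algebra R_{𝐧₁}(0) is zero. -/

import Mathlib

/-- Structure constants of `𝐧₁`. -/
def cc (i j : ℕ) : ℤ :=
  if ((i : ℤ) - j) % 3 = 1 then 1 else if ((i : ℤ) - j) % 3 = 2 then -1 else 0

/- `R_{𝐧₁}(0)` is modelled as a Lie algebra `L` with basis `b : ℕ → L`, where
`x = b 0`, `y = b 1`, and `e_n = b (n+1)` for `n ≥ 1`; thus the paper's
`e_{3i-2}, e_{3i-1}, e_{3i}` (for `i ≥ 1`) are `b (3i'+2), b (3i'+3), b (3i'+4)`
with `i = i'+1`. The bracket rules are: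
`[e_i,e_j] = c_{i,j} e_{i+j}`; `[e_{3i-2},x] = i e_{3i-2}`, `[e_{3i-1},x] = (i-1)e_{3i-1}`,
`[e_{3i},x] = i e_{3i}`; `[e_{3i-2},y] = -e_{3i-2}`, `[e_{3i-1},y] = e_{3i-1}`,
`[e_{3i},y] = 0`; `[x,y] = 0`. -/

/-- the center of the Lie algebra `R_{𝐧₁}(0)` is zero. -/
theorem statement13 (L : Type*) [LieRing L] [LieAlgebra ℂ L] (b : Module.Basis ℕ ℂ L)
    (h1 : ∀ i j : ℕ, ⁅b (i + 2), b (j + 2)⁆ = (cc (i + 1) (j + 1) : ℂ) • b (i + j + 3))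
    (h2 : ∀ i : ℕ, ⁅b (3 * i + 2), b 0⁆ = ((i : ℂ) + 1) • b (3 * i + 2))
    (h3 : ∀ i : ℕ, ⁅b (3 * i + 3), b 0⁆ = (i : ℂ) • b (3 * i + 3))
    (h4 : ∀ i : ℕ, ⁅b (3 * i + 4), b 0⁆ = ((i : ℂ) + 1) • b (3 * i + 4))
    (h5 : ∀ i : ℕ, ⁅b (3 * i + 2), b 1⁆ = -b (3 * i + 2))
    (h6 : ∀ i : ℕ, ⁅b (3 * i + 3), b 1⁆ = b (3 * i + 3))
    (h7 : ∀ i : ℕ, ⁅b (3 * i + 4), b 1⁆ = 0)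
    (h8 : ⁅b 0, b 1⁆ = 0)
    : LieAlgebra.center ℂ L = ⊥ := by
  rw [LieSubmodule.eq_bot_iff]
  intro z hzc
  have hz : ∀ x : L, ⁅x, z⁆ = 0 :=
    (LieModule.mem_maxTrivSubmodule ℂ L L z).mp hzc
  set f := b.repr z with hf
  -- key coordinate-extraction lemma
  have main : ∀ (a : L) (k t : ℕ) (c : ℂ),
      (∀ j, j ≠ k → f j * (b.repr ⁅a, b j⁆) t = 0) →
      (b.repr ⁅a, b k⁆) t = c → c * f k = 0 := by
    intro a k t c hdiag hc
    have hdz : ⁅a, z⁆ = f.sum fun j cj => cj • ⁅a, b j⁆ := by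
      calc ⁅a, z⁆ = (LieAlgebra.ad ℂ L a) (f.sum fun j cj => cj • b j) := by
            rw [← Finsupp.linearCombination_apply, b.linearCombination_repr]; rfl
        _ = f.sum fun j cj => (LieAlgebra.ad ℂ L a) (cj • b j) := map_finsuppSum _ _ _
        _ = f.sum fun j cj => cj • ⁅a, b j⁆ := by
            simp [Finsupp.sum, LieAlgebra.ad_apply]
    have h0 : (0 : ℂ) = ∑ j ∈ f.support, f j * (b.repr ⁅a, b j⁆) t := by
      have : (b.repr ⁅a, z⁆) t = 0 := by rw [hz a]; simp
      rw [hdz, map_finsuppSum, Finsupp.sum_apply] at this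
      rw [← this]
      simp [Finsupp.sum]
    have hs : ∑ j ∈ f.support, f j * (b.repr ⁅a, b j⁆) t
        = f k * (b.repr ⁅a, b k⁆) t := by
      refine Finset.sum_eq_single k (fun j _ hjk => hdiag j hjk) (fun hk => ?_)
      rw [Finsupp.notMem_support_iff.mp hk, zero_mul]
    rw [hs, hc, mul_comm] at h0
    exact h0.symm
  -- diagonal facts
  have diag0 : ∀ j : ℕ, ∃ d : ℂ, ⁅b 0, b j⁆ = d • b j := by
    intro j
    rcases j with _ | _ | m
    · exact ⟨0, by simp⟩
    · exact ⟨0, by simpa using h8⟩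
    · have hm : m = 3 * (m / 3) + m % 3 := (Nat.div_add_mod m 3).symm
      have hr : m % 3 < 3 := Nat.mod_lt _ (by norm_num)
      set q := m / 3 with hq
      interval_cases h : m % 3
      · exact ⟨-((q : ℂ) + 1), by rw [← lie_skew, show m + 1 + 1 = 3 * q + 2 by omega, h2 q,
          neg_smul]⟩
      · exact ⟨-(q : ℂ), by rw [← lie_skew, show m + 1 + 1 = 3 * q + 3 by omega, h3 q, neg_smul]⟩
      · exact ⟨-((q : ℂ) + 1), by rw [← lie_skew, show m + 1 + 1 = 3 * q + 4 by omega, h4 q,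
          neg_smul]⟩
  have diag1 : ∀ j : ℕ, ∃ d : ℂ, ⁅b 1, b j⁆ = d • b j := by
    intro j
    rcases j with _ | _ | m
    · exact ⟨0, by rw [← lie_skew, h8]; simp⟩
    · exact ⟨0, by simp⟩
    · have hm : m = 3 * (m / 3) + m % 3 := (Nat.div_add_mod m 3).symm
      have hr : m % 3 < 3 := Nat.mod_lt _ (by norm_num)
      set q := m / 3 with hq
      interval_cases h : m % 3
      · exact ⟨1, by rw [← lie_skew, show m + 1 + 1 = 3 * q + 2 by omega, h5 q]; simp⟩
      · exact ⟨-1, by rw [← lie_skew, show m + 1 + 1 = 3 * q + 3 by omega, h6 q]; simp⟩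
      · exact ⟨0, by rw [← lie_skew, show m + 1 + 1 = 3 * q + 4 by omega, h7 q]; simp⟩
  have diagzero : ∀ (a : L), (∀ j : ℕ, ∃ d : ℂ, ⁅a, b j⁆ = d • b j) →
      ∀ j k : ℕ, j ≠ k → (b.repr ⁅a, b j⁆) k = 0 := by
    intro a hd j k hjk
    obtain ⟨d, hdj⟩ := hd j
    rw [hdj, map_smul]
    simp [Module.Basis.repr_self, Finsupp.single_apply, hjk]
  -- step 1: f (3q+2) = 0
  have s1 : ∀ q : ℕ, f (3 * q + 2) = 0 := by
    intro q
    have hc : (b.repr ⁅b 0, b (3 * q + 2)⁆) (3 * q + 2) = -((q : ℂ) + 1) := by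
      rw [← lie_skew, h2 q]
      simp [Module.Basis.repr_self]
    have := main (b 0) (3 * q + 2) (3 * q + 2) (-((q : ℂ) + 1))
      (fun j hjk => by rw [diagzero (b 0) diag0 j _ hjk, mul_zero]) hc
    have hne : -((q : ℂ) + 1) ≠ 0 := neg_ne_zero.mpr (Nat.cast_add_one_ne_zero q)
    exact (mul_eq_zero.mp this).resolve_left hne
  -- step 2: f (3q+4) = 0
  have s2 : ∀ q : ℕ, f (3 * q + 4) = 0 := by
    intro q
    have hc : (b.repr ⁅b 0, b (3 * q + 4)⁆) (3 * q + 4) = -((q : ℂ) + 1) := by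
      rw [← lie_skew, h4 q]
      simp [Module.Basis.repr_self]
    have := main (b 0) (3 * q + 4) (3 * q + 4) (-((q : ℂ) + 1))
      (fun j hjk => by rw [diagzero (b 0) diag0 j _ hjk, mul_zero]) hc
    have hne : -((q : ℂ) + 1) ≠ 0 := neg_ne_zero.mpr (Nat.cast_add_one_ne_zero q)
    exact (mul_eq_zero.mp this).resolve_left hne
  -- step 3: f (3q+3) = 0
  have s3 : ∀ q : ℕ, f (3 * q + 3) = 0 := by
    intro q
    have hc : (b.repr ⁅b 1, b (3 * q + 3)⁆) (3 * q + 3) = -1 := by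
      rw [← lie_skew, h6 q]
      simp [Module.Basis.repr_self]
    have := main (b 1) (3 * q + 3) (3 * q + 3) (-1)
      (fun j hjk => by rw [diagzero (b 1) diag1 j _ hjk, mul_zero]) hc
    have hne : (-1 : ℂ) ≠ 0 := by norm_num
    exact (mul_eq_zero.mp this).resolve_left hne
  -- step 4: f 1 = 0, using bracket with b 3
  have s4 : f 1 = 0 := by
    have hb3 : b 3 = b (3 * 0 + 3) := by norm_num
    have hc : (b.repr ⁅b 3, b 1⁆) 3 = 1 := by
      rw [hb3, h6 0]
      simp [Module.Basis.repr_self]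
    have hdiag : ∀ j, j ≠ 1 → f j * (b.repr ⁅b 3, b j⁆) 3 = 0 := by
      intro j hj1
      rcases j with _ | _ | m
      · rw [hb3, h3 0]
        simp
      · exact absurd rfl hj1
      · have : ⁅b 3, b (m + 2)⁆ = (cc 2 (m + 1) : ℂ) • b (m + 4) := by
          have := h1 1 m
          norm_num at this ⊢
          convert this using 3 <;> omega
        rw [this, map_smul]
        simp [Module.Basis.repr_self, Finsupp.single_apply, show m + 4 ≠ 3 by omega]
    have := main (b 3) 1 3 1 hdiag hc
    simpa using this
  -- step 5: f 0 = 0, using bracket with b 2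
  have s5 : f 0 = 0 := by
    have hb2 : b 2 = b (3 * 0 + 2) := by norm_num
    have hc : (b.repr ⁅b 2, b 0⁆) 2 = 1 := by
      rw [hb2, h2 0]
      simp [Module.Basis.repr_self]
    have hdiag : ∀ j, j ≠ 0 → f j * (b.repr ⁅b 2, b j⁆) 2 = 0 := by
      intro j hj0
      rcases j with _ | _ | m
      · exact absurd rfl hj0
      · rw [s4, zero_mul]
      · have : ⁅b 2, b (m + 2)⁆ = (cc 1 (m + 1) : ℂ) • b (m + 3) := by
          have := h1 0 m
          norm_num at this ⊢
          convert this using 3 <;> omega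
        rw [this, map_smul]
        simp [Module.Basis.repr_self, Finsupp.single_apply, show m + 3 ≠ 2 by omega]
    have := main (b 2) 0 2 1 hdiag hc
    simpa using this
  -- conclude
  have hall : ∀ k : ℕ, f k = 0 := by
    intro k
    rcases k with _ | _ | m
    · exact s5
    · exact s4
    · have hm : m = 3 * (m / 3) + m % 3 := (Nat.div_add_mod m 3).symm
      have hr : m % 3 < 3 := Nat.mod_lt _ (by norm_num)
      set q := m / 3 with hq
      interval_cases h : m % 3
      · rw [show m + 1 + 1 = 3 * q + 2 by omega]; exact s1 q
      · rw [show m + 1 + 1 = 3 * q + 3 by omega]; exact s3 q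
      · rw [show m + 1 + 1 = 3 * q + 4 by omega]; exact s2 q
  have : f = 0 := Finsupp.ext hall
  have : b.repr z = 0 := this
  simpa using b.repr.injective (by simpa using this)
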